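/- arXiv:1506.04851 — 2 statements merged into one kernel-verified Lean document; each statement's English description precedes it below -/
import Mathlib

section
/- Let V_0 > 2, let V_m, V_M > 0, L_1 ∈ [0, L_2), R > 0, and let V : [0,∞) → ℝ be continuous with 0 ≤ V(x) everywhere, V(x) ≥ V_m on [L_1, L_2], V(x) ≤ V_M on [0, L_2], and V_0/(1+x) ≤ V(x) ≤ V_1/(1+x) for x ≥ L_2 (with V_1 ≥ V_0). Set ε_1 = 1, ε_2 = V_0/2, ε_3 = 2V_0, k = 4V_0 V*/(V_0−2) where V* = max{(1+L_2)V_M, V_1}, f(t)=ε_1(1+t)^2, g(t)=ε_2(1+t), h(t,x)=ε_3(1+t)φ(x), where φ is smooth nondecreasing with φ(x)=1+x on [0,L_1] and φ(x)=1+L_2 for x ≥ L_2. Then there exists t_0 > 0 such that for all t ≥ t_0 and all x ∈ [0, R+t]: 2f(t)V(x) − f'(t) − 2g(t) + (∂_x h)(t,x) − k·h(t,x)V(x) − (∂_t h)(t,x) > 0. -/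
open Set

/-- Lemma 2.4(iii): with `ε₁=1, ε₂=V₀/2, ε₃=2V₀, k=4V₀V*/(V₀−2)`,
`f(t)=(1+t)², g(t)=(V₀/2)(1+t), h(t,x)=2V₀(1+t)φ(x)`, for large `t` and
`0 ≤ x ≤ R+t` one has `2fV − f' − 2g + h_x − khV − h_t > 0`. -/
theorem stmt_12 (V0 Vm VM V1 L1 L2 R : ℝ) (V φ φ' : ℝ → ℝ)
    (hV0 : V0 > 2) (hVm : Vm > 0) (hVM : VM > 0) (hV1 : V1 ≥ V0)
    (hL1 : 0 ≤ L1) (hL12 : L1 < L2) (hR : R > 0)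
    (hVcont : ContinuousOn V (Ici 0))
    (hVpos : ∀ x ≥ (0:ℝ), 0 ≤ V x)
    (hVlow : ∀ x ∈ Icc L1 L2, Vm ≤ V x)
    (hVup : ∀ x ∈ Icc (0:ℝ) L2, V x ≤ VM)
    (hVinf : ∀ x ≥ L2, V0 / (1 + x) ≤ V x ∧ V x ≤ V1 / (1 + x))
    (hφderiv : ∀ x, HasDerivAt φ (φ' x) x)
    (hφ'pos : ∀ x ≥ (0:ℝ), 0 ≤ φ' x)
    (hφ1 : ∀ x ∈ Icc (0:ℝ) L1, φ x = 1 + x)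
    (hφ2 : ∀ x ≥ L2, φ x = 1 + L2) :
    ∃ t0 > (0:ℝ), ∀ t ≥ t0, ∀ x, 0 ≤ x → x ≤ R + t →
      2 * ((1 + t)^2) * V x - 2 * (1 + t) - 2 * (V0 / 2 * (1 + t))
        + 2 * V0 * (1 + t) * φ' x
        - (4 * V0 * max ((1 + L2) * VM) V1 / (V0 - 2)) * (2 * V0 * (1 + t) * φ x) * V x
        - 2 * V0 * φ x > 0 := by
  have hV02 : (0:ℝ) < V0 - 2 := by linarith
  have hV0pos : (0:ℝ) < V0 := by linarith
  have hL2 : 0 < L2 := lt_of_le_of_lt hL1 hL12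
  set K := 4 * V0 * max ((1 + L2) * VM) V1 / (V0 - 2) with hKdef
  have hK : 0 < K := by
    rw [hKdef]
    apply div_pos _ hV02
    apply mul_pos (by linarith)
    exact lt_of_lt_of_le (by linarith : (0:ℝ) < V1) (le_max_right _ _)
  -- φ facts
  have hφdiff : Differentiable ℝ φ := fun x => (hφderiv x).differentiableAt
  have hmono : MonotoneOn φ (Ici 0) := by
    apply monotoneOn_of_deriv_nonneg (convex_Ici 0) hφdiff.continuous.continuousOn
      (hφdiff.differentiableOn)
    intro x hx
    rw [(hφderiv x).deriv]
    rw [interior_Ici] at hx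
    exact hφ'pos x (le_of_lt hx)
  have hφ0 : φ 0 = 1 := by simpa using hφ1 0 ⟨le_rfl, hL1⟩
  have hφL2 : φ L2 = 1 + L2 := hφ2 L2 le_rfl
  have hφub : ∀ x ≥ (0:ℝ), φ x ≤ 1 + L2 := by
    intro x hx
    rcases le_or_gt x L2 with h | h
    · rw [← hφL2]; exact hmono hx (le_of_lt hL2) h
    · rw [hφ2 x h.le]
  have hφlb : ∀ x ≥ (0:ℝ), 0 ≤ φ x := by
    intro x hx
    have := hmono (self_mem_Ici) hx hx
    rw [hφ0] at this
    linarith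
  have hφ'1 : ∀ x, 0 ≤ x → x < L1 → φ' x = 1 := by
    intro x hx0 hxL
    have hu : UniqueDiffWithinAt ℝ (Ici x) x := uniqueDiffOn_Ici x x self_mem_Ici
    have h1 : HasDerivWithinAt φ (φ' x) (Ici x) x := (hφderiv x).hasDerivWithinAt
    have h2 : HasDerivWithinAt (fun y : ℝ => 1 + y) 1 (Ici x) x := by
      simpa using ((hasDerivAt_id x).const_add (1:ℝ)).hasDerivWithinAt
    have heq : φ =ᶠ[nhdsWithin x (Ici x)] fun y : ℝ => 1 + y := by
      filter_upwards [Ico_mem_nhdsGE hxL] with y hy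
      exact hφ1 y ⟨le_trans hx0 hy.1, hy.2.le⟩
    have h3 : HasDerivWithinAt φ 1 (Ici x) x :=
      h2.congr_of_eventuallyEq heq (hφ1 x ⟨hx0, hxL.le⟩)
    exact (h1.derivWithin hu).symm.trans (h3.derivWithin hu)
  -- constants
  have hApos : (0:ℝ) < K * V0 * (1 + L2) := by
    apply mul_pos (mul_pos hK hV0pos); linarith
  have hBpos : (0:ℝ) < 2 * V0 * (1 + L2) := by nlinarith
  have hCpos : (0:ℝ) < (2 + V0) + 2 * K * V0 * (1 + L2) * VM + 2 * V0 * (1 + L2) := by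
    nlinarith [mul_pos (mul_pos hApos hVM) (by norm_num : (0:ℝ) < 2)]
  have hDpos : (0:ℝ) < 2 * V0 * (K * V0 * (1 + L2)) + (2 + V0) * R + 2 * V0 * (1 + L2)
      + 2 * V0 * (1 + L2) * R := by
    nlinarith [mul_pos hV0pos hApos, mul_pos hBpos hR]
  refine ⟨1 + K * V0 * (1 + L2) + (2 * V0 * (1 + L2)) / (V0 - 2)
      + ((2 + V0) + 2 * K * V0 * (1 + L2) * VM + 2 * V0 * (1 + L2)) / (2 * Vm)
      + (2 * V0 * (K * V0 * (1 + L2)) + (2 + V0) * R + 2 * V0 * (1 + L2)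
        + 2 * V0 * (1 + L2) * R) / (V0 - 2),
    by positivity, ?_⟩
  intro t ht x hx0 hxRt
  have hd1 : 0 ≤ (2 * V0 * (1 + L2)) / (V0 - 2) := by positivity
  have hd2 : 0 ≤ ((2 + V0) + 2 * K * V0 * (1 + L2) * VM + 2 * V0 * (1 + L2)) / (2 * Vm) :=
    le_of_lt (div_pos hCpos (by linarith))
  have hd3 : 0 ≤ (2 * V0 * (K * V0 * (1 + L2)) + (2 + V0) * R + 2 * V0 * (1 + L2)
      + 2 * V0 * (1 + L2) * R) / (V0 - 2) := le_of_lt (div_pos hDpos hV02)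
  have htpos : 0 < t := by linarith
  have h0t : (0:ℝ) < 1 + t := by linarith
  have h1t : (1:ℝ) ≤ 1 + t := by linarith
  have hAt : K * V0 * (1 + L2) + 1 ≤ 1 + t := by linarith
  have F1 : 2 * V0 * (1 + L2) < (1 + t) * (V0 - 2) := by
    rw [← div_lt_iff₀ hV02]; linarith
  have F2 : (2 + V0) + 2 * K * V0 * (1 + L2) * VM + 2 * V0 * (1 + L2) < (1 + t) * (2 * Vm) := by
    rw [← div_lt_iff₀ (by linarith : (0:ℝ) < 2 * Vm)]; linarith
  have F3 : 2 * V0 * (K * V0 * (1 + L2)) + (2 + V0) * R + 2 * V0 * (1 + L2)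
      + 2 * V0 * (1 + L2) * R < (1 + t) * (V0 - 2) := by
    rw [← div_lt_iff₀ hV02]; linarith
  have hVx0 : 0 ≤ V x := hVpos x hx0
  rcases lt_or_ge x L1 with hx1 | hx1
  · -- region 1 : 0 ≤ x < L1
    rw [hφ1 x ⟨hx0, hx1.le⟩, hφ'1 x hx0 hx1]
    have hxL2 : x ≤ L2 := by linarith
    have hcoef : K * V0 * (1 + x) ≤ 1 + t := by
      have : K * V0 * (1 + x) ≤ K * V0 * (1 + L2) :=
        mul_le_mul_of_nonneg_left (by linarith) (le_of_lt (mul_pos hK hV0pos))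
      linarith
    have key : 0 ≤ 2 * (1 + t) * V x * ((1 + t) - K * V0 * (1 + x)) :=
      mul_nonneg (mul_nonneg (by linarith) hVx0) (by linarith)
    have hφxb : 2 * V0 * (1 + x) ≤ 2 * V0 * (1 + L2) :=
      mul_le_mul_of_nonneg_left (by linarith) (by linarith)
    linarith [key, F1, hφxb]
  · rcases le_or_gt x L2 with hx2 | hx2
    · -- region 2 : L1 ≤ x ≤ L2
      have hVl : Vm ≤ V x := hVlow x ⟨hx1, hx2⟩
      have hVu : V x ≤ VM := hVup x ⟨hx0, hx2⟩
      have hφu : φ x ≤ 1 + L2 := hφub x hx0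
      have hφl : 0 ≤ φ x := hφlb x hx0
      have hφ'x : 0 ≤ φ' x := hφ'pos x hx0
      have ha : 2 * (1 + t)^2 * Vm ≤ 2 * (1 + t)^2 * V x :=
        mul_le_mul_of_nonneg_left hVl (by positivity)
      have hb : 0 ≤ 2 * V0 * (1 + t) * φ' x :=
        mul_nonneg (mul_nonneg (by linarith) h0t.le) hφ'x
      have hφV : φ x * V x ≤ (1 + L2) * VM := mul_le_mul hφu hVu hVx0 (by linarith)
      have hKc : 0 ≤ K * (2 * V0 * (1 + t)) :=
        mul_nonneg hK.le (mul_nonneg (by linarith) h0t.le)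
      have hc : K * (2 * V0 * (1 + t) * φ x) * V x ≤ K * (2 * V0 * (1 + t)) * ((1 + L2) * VM) := by
        linarith [mul_le_mul_of_nonneg_left hφV hKc]
      have hd : 2 * V0 * φ x ≤ 2 * V0 * (1 + L2) :=
        mul_le_mul_of_nonneg_left hφu (by linarith)
      have hF2t : ((2 + V0) + 2 * K * V0 * (1 + L2) * VM + 2 * V0 * (1 + L2)) * (1 + t)
          < (1 + t) * (2 * Vm) * (1 + t) := mul_lt_mul_of_pos_right F2 h0t
      linarith [ha, hb, hc, hd, hF2t, mul_nonneg hBpos.le htpos.le]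
    · -- region 3 : L2 < x ≤ R + t
      rw [hφ2 x hx2.le]
      have hx1p : (0:ℝ) < 1 + x := by linarith
      have hRtpos : (0:ℝ) < 1 + R + t := by linarith
      have hle : 1 + x ≤ 1 + R + t := by linarith
      have hdiv : V0 / (1 + R + t) ≤ V0 / (1 + x) :=
        div_le_div_of_nonneg_left hV0pos.le hx1p hle
      have hw : V0 / (1 + R + t) ≤ V x := hdiv.trans (hVinf x hx2.le).1
      have hcoef : 0 ≤ 2 * (1 + t)^2 - 2 * K * V0 * (1 + t) * (1 + L2) := by
        have h := mul_le_mul_of_nonneg_left (show K * V0 * (1 + L2) ≤ 1 + t by linarith) h0t.le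
        linarith [h]
      have hkey1 : (2 * (1 + t)^2 - 2 * K * V0 * (1 + t) * (1 + L2)) * (V0 / (1 + R + t))
          ≤ (2 * (1 + t)^2 - 2 * K * V0 * (1 + t) * (1 + L2)) * V x :=
        mul_le_mul_of_nonneg_left hw hcoef
      have hpoly : ((2 + V0) * (1 + t) + 2 * V0 * (1 + L2)) * (1 + R + t)
          < (2 * (1 + t)^2 - 2 * K * V0 * (1 + t) * (1 + L2)) * V0 := by
        linarith [mul_lt_mul_of_pos_right F3 h0t,
          mul_nonneg (mul_nonneg hBpos.le hR.le) htpos.le]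
      have hkey2 : (2 + V0) * (1 + t) + 2 * V0 * (1 + L2)
          < (2 * (1 + t)^2 - 2 * K * V0 * (1 + t) * (1 + L2)) * (V0 / (1 + R + t)) := by
        rw [show (2 * (1 + t)^2 - 2 * K * V0 * (1 + t) * (1 + L2)) * (V0 / (1 + R + t))
            = (2 * (1 + t)^2 - 2 * K * V0 * (1 + t) * (1 + L2)) * V0 / (1 + R + t) from by ring]
        exact (lt_div_iff₀ hRtpos).mpr hpoly
      have hb : 0 ≤ 2 * V0 * (1 + t) * φ' x :=
        mul_nonneg (mul_nonneg (by linarith) h0t.le) (hφ'pos x hx0)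
      linarith [hkey1, hkey2, hb]
end

section
/- With the same notation and hypotheses as in the previous statement (V_0 > 2, ε_1 = 1, ε_2 = V_0/2, ε_3 = 2V_0, k = 4V_0V*/(V_0−2), V* = max{(1+L_2)V_M, V_1}, f(t)=ε_1(1+t)^2, g(t)=ε_2(1+t), h(t,x)=ε_3(1+t)φ(x)), there exists t_0 > 0 such that for all t ≥ t_0 and all x ∈ [0,∞): 2g(t) − f'(t) + (∂_x h)(t,x) − (1/k)h(t,x)V(x) − (∂_t h)(t,x) > 0. -/
open Set

/-- Lemma 2.4(iv): with the same parameter choices, for large `t` and all `x ≥ 0`,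
`2g − f' + h_x − (1/k)hV − h_t > 0`. -/
theorem stmt_13 (V0 Vm VM V1 L1 L2 : ℝ) (V φ φ' : ℝ → ℝ)
    (hV0 : V0 > 2) (hVm : Vm > 0) (hVM : VM > 0) (hV1 : V1 ≥ V0)
    (hL1 : 0 ≤ L1) (hL12 : L1 < L2)
    (hVcont : ContinuousOn V (Ici 0))
    (hVpos : ∀ x ≥ (0:ℝ), 0 ≤ V x)
    (hVlow : ∀ x ∈ Icc L1 L2, Vm ≤ V x)
    (hVup : ∀ x ∈ Icc (0:ℝ) L2, V x ≤ VM)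
    (hVinf : ∀ x ≥ L2, V0 / (1 + x) ≤ V x ∧ V x ≤ V1 / (1 + x))
    (hφderiv : ∀ x, HasDerivAt φ (φ' x) x)
    (hφ'pos : ∀ x ≥ (0:ℝ), 0 ≤ φ' x)
    (hφ1 : ∀ x ∈ Icc (0:ℝ) L1, φ x = 1 + x)
    (hφ2 : ∀ x ≥ L2, φ x = 1 + L2) :
    ∃ t0 > (0:ℝ), ∀ t ≥ t0, ∀ x ≥ (0:ℝ),
      2 * (V0 / 2 * (1 + t)) - 2 * (1 + t)
        + 2 * V0 * (1 + t) * φ' x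
        - (1 / (4 * V0 * max ((1 + L2) * VM) V1 / (V0 - 2)))
            * (2 * V0 * (1 + t) * φ x) * V x
        - 2 * V0 * φ x > 0 := by
  set Vs : ℝ := max ((1 + L2) * VM) V1 with hVsdef
  have hL2 : (0:ℝ) < L2 := lt_of_le_of_lt hL1 hL12
  have hVs1 : (1 + L2) * VM ≤ Vs := le_max_left _ _
  have hVs2 : V1 ≤ Vs := le_max_right _ _
  have hVspos : (0:ℝ) < Vs := lt_of_lt_of_le (by linarith) hVs2
  -- φ is monotone on [0,∞)
  have hφcont : Continuous φ :=
    continuous_iff_continuousAt.2 fun x => (hφderiv x).continuousAt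
  have hmono : MonotoneOn φ (Ici (0:ℝ)) := by
    apply monotoneOn_of_deriv_nonneg (convex_Ici 0) hφcont.continuousOn
    · intro x _
      exact (hφderiv x).differentiableAt.differentiableWithinAt
    · intro x hx
      rw [interior_Ici] at hx
      rw [(hφderiv x).deriv]
      exact hφ'pos x (le_of_lt hx)
  have hφL2 : φ L2 = 1 + L2 := hφ2 L2 (le_refl _)
  have hφ0 : φ 0 = 1 := by
    have := hφ1 0 ⟨le_refl _, hL1⟩; simpa using this
  -- bounds on φ
  have hφub : ∀ x ≥ (0:ℝ), φ x ≤ 1 + L2 := by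
    intro x hx
    rcases le_or_gt x L2 with h | h
    · calc φ x ≤ φ L2 := hmono hx (le_of_lt hL2) h
        _ = 1 + L2 := hφL2
    · rw [hφ2 x (le_of_lt h)]
  have hφlb : ∀ x ≥ (0:ℝ), (0:ℝ) ≤ φ x := by
    intro x hx
    have : φ 0 ≤ φ x := hmono (le_refl (0:ℝ)) hx hx
    linarith [hφ0 ▸ this]
  -- key bound : φ x * V x ≤ Vs
  have hkey : ∀ x ≥ (0:ℝ), φ x * V x ≤ Vs := by
    intro x hx
    rcases le_or_gt x L2 with h | h
    · have h1 : φ x ≤ 1 + L2 := hφub x hx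
      have h2 : V x ≤ VM := hVup x ⟨hx, h⟩
      have h3 : 0 ≤ V x := hVpos x hx
      have h4 : 0 ≤ φ x := hφlb x hx
      calc φ x * V x ≤ (1 + L2) * VM := by nlinarith
        _ ≤ Vs := hVs1
    · rw [hφ2 x (le_of_lt h)]
      have h2 := (hVinf x (le_of_lt h)).2
      have hx1 : (0:ℝ) < 1 + x := by linarith
      have hV1pos : (0:ℝ) < V1 := by linarith
      have : (1 + L2) * V x ≤ V1 := by
        have h3 : (1 + L2) * V x ≤ (1 + L2) * (V1 / (1 + x)) := by nlinarith
        have h4 : (1 + L2) * (V1 / (1 + x)) ≤ V1 := by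
          rw [← mul_div_assoc, div_le_iff₀ hx1]
          nlinarith
        linarith
      linarith [hVs2]
  -- choose t0
  refine ⟨4 * V0 * (1 + L2) / (V0 - 2) + 1, ?_, ?_⟩
  · have : 0 < 4 * V0 * (1 + L2) / (V0 - 2) :=
      div_pos (by nlinarith) (by linarith)
    linarith
  intro t ht x hx
  have ht0 : (0:ℝ) < 1 + t := by
    have : 0 < 4 * V0 * (1 + L2) / (V0 - 2) :=
      div_pos (by nlinarith) (by linarith)
    linarith
  -- bound the division term
  have hterm : (1 / (4 * V0 * Vs / (V0 - 2))) * (2 * V0 * (1 + t) * φ x) * V x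
      ≤ (V0 - 2) / 2 * (1 + t) := by
    rw [one_div_div]
    have heq : (V0 - 2) / (4 * V0 * Vs) * (2 * V0 * (1 + t) * φ x) * V x
        = ((V0 - 2) * (1 + t) / (2 * Vs)) * (φ x * V x) := by
      field_simp; ring
    rw [heq]
    have hc : 0 ≤ (V0 - 2) * (1 + t) / (2 * Vs) :=
      div_nonneg (by nlinarith) (by linarith)
    calc ((V0 - 2) * (1 + t) / (2 * Vs)) * (φ x * V x)
        ≤ ((V0 - 2) * (1 + t) / (2 * Vs)) * Vs :=
          mul_le_mul_of_nonneg_left (hkey x hx) hc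
      _ = (V0 - 2) / 2 * (1 + t) := by field_simp
  have hφ'nn : 0 ≤ 2 * V0 * (1 + t) * φ' x :=
    mul_nonneg (mul_nonneg (by linarith) ht0.le) (hφ'pos x hx)
  have hφb : 2 * V0 * φ x ≤ 2 * V0 * (1 + L2) := by
    have := hφub x hx
    nlinarith
  have hdiv : (V0 - 2) * (4 * V0 * (1 + L2) / (V0 - 2)) = 4 * V0 * (1 + L2) := by
    rw [mul_comm]; exact div_mul_cancel₀ _ (by linarith : V0 - 2 ≠ 0)
  nlinarith [hterm, hφ'nn, hφb, hdiv, ht]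
end
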